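/- (Proposition 1, spherically symmetric blow-up at an outermost MOTS.) Let ℓ₀ ∈ ℝ and let R, K_ℓ, K_R : [ℓ₀,∞) → ℝ be smooth with R > 0; set H = 2R'/R, θ⁺ = 2K_R + H, θ⁻ = 2K_R − H, trK = K_ℓ + 2K_R. Assume the decay conditions |R²/ℓ² − 1| = O(ℓ⁻¹), |H − 2/ℓ| = O(ℓ⁻²), |∂_ℓ H + 2/ℓ²| = O(ℓ⁻³), |K_ℓ|, |K_R| = O(ℓ⁻²), |∂_ℓ K_ℓ|, |∂_ℓ K_R| = O(ℓ⁻³), |trK| = O(ℓ⁻³), and that either θ⁻(ℓ) < 0 for all ℓ or trK(ℓ) < 0 for all ℓ. Suppose ℓ* ≥ ℓ₀ satisfies θ⁺(ℓ*) = 0, θ⁺(ℓ) > 0 for all ℓ > ℓ* (ℓ* is the outermost MOTS), and there is m ≥ 1 with ∂_ℓ^m θ⁺(ℓ*) > 0 (ℓ* is finitely stable). Then there exists a smooth solution k of ∂_ℓ k = −K_ℓ k² − H k + trK on [ℓ*,∞) with k(ℓ*) = −1, ∂_ℓ k(ℓ*) = 0, |k(ℓ)| < 1 for all ℓ > ℓ*,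 and k(ℓ) → 0 as ℓ → ∞ (a blow-up solution for ℓ*). -/

import Mathlib

open Filter Asymptotics Set Topology

/-- Mean curvature `H = 2 R' / R` of the spherically symmetric spheres. -/
noncomputable def Hf (R : ℝ → ℝ) : ℝ → ℝ := fun ℓ => 2 * deriv R ℓ / R ℓ

/-- `trK = K_ℓ + 2 K_R`. -/
def trKf (Kl KR : ℝ → ℝ) : ℝ → ℝ := fun ℓ => Kl ℓ + 2 * KR ℓ

/-- Outer expansion `θ⁺ = 2 K_R + H`. -/
noncomputable def thetaPlus (R KR : ℝ → ℝ) : ℝ → ℝ := fun ℓ => 2 * KR ℓ + Hf R ℓ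

/-- Inner expansion `θ⁻ = 2 K_R − H`. -/
noncomputable def thetaMinus (R KR : ℝ → ℝ) : ℝ → ℝ := fun ℓ => 2 * KR ℓ - Hf R ℓ

/-- The asymptotic flatness decay conditions (2.8)-(2.13) of the paper:
`|R²/ℓ² − 1| = O(ℓ⁻¹)`, `|H − 2/ℓ| = O(ℓ⁻²)`, `|∂_ℓ H + 2/ℓ²| = O(ℓ⁻³)`,
`|K_ℓ|, |K_R| = O(ℓ⁻²)`, `|∂_ℓ K_ℓ|, |∂_ℓ K_R| = O(ℓ⁻³)`, `|trK| = O(ℓ⁻³)`. -/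
def JangDecay (R Kl KR : ℝ → ℝ) : Prop :=
  (fun ℓ => R ℓ ^ 2 / ℓ ^ 2 - 1) =O[Filter.atTop] (fun ℓ : ℝ => ℓ⁻¹) ∧
  (fun ℓ => Hf R ℓ - 2 / ℓ) =O[Filter.atTop] (fun ℓ : ℝ => (ℓ ^ 2)⁻¹) ∧
  (fun ℓ => deriv (Hf R) ℓ + 2 / ℓ ^ 2) =O[Filter.atTop] (fun ℓ : ℝ => (ℓ ^ 3)⁻¹) ∧
  Kl =O[Filter.atTop] (fun ℓ : ℝ => (ℓ ^ 2)⁻¹) ∧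
  KR =O[Filter.atTop] (fun ℓ : ℝ => (ℓ ^ 2)⁻¹) ∧
  deriv Kl =O[Filter.atTop] (fun ℓ : ℝ => (ℓ ^ 3)⁻¹) ∧
  deriv KR =O[Filter.atTop] (fun ℓ : ℝ => (ℓ ^ 3)⁻¹) ∧
  trKf Kl KR =O[Filter.atTop] (fun ℓ : ℝ => (ℓ ^ 3)⁻¹)

/-- A blow-up solution for the surface `ℓ*`: a smooth solution `k` of the reduced
Jang equation `∂_ℓ k = −K_ℓ k² − H k + trK` on `[ℓ*,∞)` with `k(ℓ*) = −1`,
`|k(ℓ)| < 1` for all `ℓ > ℓ*`, and `k(ℓ) → 0` as `ℓ → ∞`. -/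
def IsBlowupSolution (R Kl KR : ℝ → ℝ) (ℓs : ℝ) (k : ℝ → ℝ) : Prop :=
  ContDiffOn ℝ (⊤ : ℕ∞) k (Set.Ici ℓs) ∧
  (∀ ℓ ∈ Set.Ici ℓs,
    HasDerivAt k (-(Kl ℓ) * k ℓ ^ 2 - Hf R ℓ * k ℓ + trKf Kl KR ℓ) ℓ) ∧
  k ℓs = -1 ∧
  (∀ ℓ, ℓs < ℓ → |k ℓ| < 1) ∧
  Filter.Tendsto k Filter.atTop (nhds 0)

/-! ### Auxiliary definitions -/

/-- Clamp to `[-1,1]`. -/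
noncomputable def clampJ (x : ℝ) : ℝ := max (-1) (min 1 x)

/-- The Riccati right-hand side. -/
noncomputable def Ff (R Kl KR : ℝ → ℝ) : ℝ → ℝ → ℝ :=
  fun t x => -(Kl t) * x ^ 2 - Hf R t * x + trKf Kl KR t

/-- Truncated right-hand side. -/
noncomputable def Fcf (R Kl KR : ℝ → ℝ) : ℝ → ℝ → ℝ :=
  fun t x => Ff R Kl KR t (clampJ x)

lemma clampJ_lipschitz : LipschitzWith 1 clampJ := by
  have h : ((-1 : ℝ)) ≤ 1 := by norm_num
  have : clampJ = (fun y : Icc (-1 : ℝ) 1 => (y : ℝ)) ∘ projIcc (-1) 1 h := by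
    funext x; simp [clampJ, projIcc]
  rw [this]
  simpa using LipschitzWith.subtype_val (Icc (-1:ℝ) 1) |>.comp (LipschitzWith.projIcc h)

lemma clampJ_mem (x : ℝ) : clampJ x ∈ Icc (-1 : ℝ) 1 := by
  constructor
  · exact le_max_left _ _
  · simp only [clampJ, max_le_iff]
    exact ⟨by norm_num, min_le_left _ _⟩

lemma clampJ_eq {x : ℝ} (h1 : -1 ≤ x) (h2 : x ≤ 1) : clampJ x = x := by
  simp [clampJ, min_eq_right h2, max_eq_right h1]

lemma clampJ_of_le {x : ℝ} (h : x ≤ -1) : clampJ x = -1 := by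
  have : min 1 x = x := min_eq_right (h.trans (by norm_num))
  simp [clampJ, this, max_eq_left h]

/-! ### Crossing lemmas -/

lemma deriv_nonneg_of_left_le {f : ℝ → ℝ} {d t s : ℝ} (h : HasDerivAt f d t) (hs : s < t)
    (hle : ∀ u ∈ Ioo s t, f u ≤ f t) : 0 ≤ d := by
  have htend : Tendsto (slope f t) (𝓝[<] t) (𝓝 d) :=
    (hasDerivAt_iff_tendsto_slope.mp h).mono_left
      (nhdsWithin_mono _ (fun x hx => ne_of_lt hx))
  refine ge_of_tendsto htend ?_
  filter_upwards [Ioo_mem_nhdsLT_of_mem (show t ∈ Ioc s t from ⟨hs, le_rfl⟩)] with u hu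
  have h1 : f u - f t ≤ 0 := sub_nonpos.mpr (hle u hu)
  have h2 : u - t < 0 := sub_neg.mpr hu.2
  simpa [slope_def_field, div_eq_mul_inv] using div_nonneg_of_nonpos h1 h2.le

/-- No upward crossing of level `c`. -/
lemma no_cross_up {k g : ℝ → ℝ} {t₀ c : ℝ}
    (hk : ∀ t, t₀ ≤ t → HasDerivAt k (g t) t)
    (hg : ∀ t, t₀ < t → k t = c → g t < 0)
    (h0 : k t₀ < c) : ∀ t, t₀ ≤ t → k t < c := by
  intro t ht
  by_contra hcon
  push_neg at hcon
  have hkc : ContinuousOn k (Icc t₀ t) := fun u hu => ((hk u hu.1).continuousAt).continuousWithinAt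
  have ht0t : t₀ < t := by
    rcases eq_or_lt_of_le ht with h | h
    · rw [← h] at hcon; linarith
    · exact h
  set S : Set ℝ := Icc t₀ t ∩ k ⁻¹' (Ici c) with hS
  have hScl : IsClosed S := hkc.preimage_isClosed_of_isClosed isClosed_Icc isClosed_Ici
  have hScp : IsCompact S := isCompact_Icc.of_isClosed_subset hScl inter_subset_left
  have hSne : S.Nonempty := ⟨t, ⟨ht, le_rfl⟩, hcon⟩
  obtain ⟨hsmem, hsk⟩ : sInf S ∈ S := hScp.sInf_mem hSne
  set s := sInf S
  have hbdd : BddBelow S := hScp.bddBelow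
  have hlt : ∀ u ∈ Ioo t₀ s, k u < c := by
    intro u hu
    have hnot : u ∉ S := notMem_of_lt_csInf hu.2 hbdd
    have humem : u ∈ Icc t₀ t := ⟨hu.1.le, hu.2.le.trans hsmem.2⟩
    by_contra hge
    exact hnot ⟨humem, not_lt.mp hge⟩
  have ht0s : t₀ < s := by
    rcases eq_or_lt_of_le hsmem.1 with h | h
    · rw [← h] at hsk; exact absurd hsk (not_le.mpr h0)
    · exact h
  have hksc : k s = c := by
    refine le_antisymm ?_ hsk
    have htend : Tendsto k (𝓝[<] s) (𝓝 (k s)) :=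
      ((hk s hsmem.1).continuousAt).continuousWithinAt
    refine le_of_tendsto htend ?_
    filter_upwards [Ioo_mem_nhdsLT_of_mem (show s ∈ Ioc t₀ s from ⟨ht0s, le_rfl⟩)] with u hu
    exact (hlt u hu).le
  have hder : 0 ≤ g s :=
    deriv_nonneg_of_left_le (hk s hsmem.1) ht0s
      (fun u hu => (hlt u hu).le.trans (le_of_eq hksc.symm))
  exact absurd (hg s ht0s hksc) (not_lt.mpr hder)

/-- No downward crossing of level `c`. -/
lemma no_cross_down {k g : ℝ → ℝ} {t₀ c : ℝ}
    (hk : ∀ t, t₀ ≤ t → HasDerivAt k (g t) t)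
    (hg : ∀ t, t₀ < t → k t = c → 0 < g t)
    (h0 : c < k t₀) : ∀ t, t₀ ≤ t → c < k t := by
  intro t ht
  have := no_cross_up (k := fun u => -k u) (g := fun u => -g u) (t₀ := t₀) (c := -c)
    (fun u hu => (hk u hu).neg)
    (fun u hu hku => by
      have hkuc : k u = c := by
        have : -k u = -c := hku
        linarith
      simpa using hg u hu hkuc)
    (by simpa using neg_lt_neg h0) t ht
  have h2 : -k t < -c := this
  linarith

/-- Integrated comparison: if `k' ≤ c / u` on `[A,B]` then
`k B ≤ k A + c (log B - log A)`. -/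
lemma integrate_le_log {k g : ℝ → ℝ} {A B c : ℝ} (hAB : A ≤ B) (hA0 : 0 < A)
    (h : ∀ u ∈ Icc A B, HasDerivAt k (g u) u) (hb : ∀ u ∈ Icc A B, g u ≤ c / u) :
    k B ≤ k A + c * (Real.log B - Real.log A) := by
  set φ : ℝ → ℝ := fun u => k u - c * Real.log u with hφdef
  have hφ : ∀ u ∈ Icc A B, HasDerivAt φ (g u - c / u) u := by
    intro u hu
    have hu0 : u ≠ 0 := (lt_of_lt_of_le hA0 hu.1).ne'
    have := (h u hu).sub ((Real.hasDerivAt_log hu0).const_mul c)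
    exact this.congr_deriv (by ring)
  have hanti : AntitoneOn φ (Icc A B) := by
    refine antitoneOn_of_deriv_nonpos (convex_Icc A B)
      (fun u hu => (hφ u hu).continuousAt.continuousWithinAt)
      (fun u hu => (hφ u (interior_subset hu)).differentiableAt.differentiableWithinAt) ?_
    intro u hu
    rw [(hφ u (interior_subset hu)).deriv]
    have := hb u (interior_subset hu)
    linarith
  have := hanti (left_mem_Icc.mpr hAB) (right_mem_Icc.mpr hAB) hAB
  simp only [hφdef] at this
  linarith

lemma integrate_ge_log {k g : ℝ → ℝ} {A B c : ℝ} (hAB : A ≤ B) (hA0 : 0 < A)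
    (h : ∀ u ∈ Icc A B, HasDerivAt k (g u) u) (hb : ∀ u ∈ Icc A B, c / u ≤ g u) :
    k A + c * (Real.log B - Real.log A) ≤ k B := by
  have := integrate_le_log (k := fun u => -k u) (g := fun u => -g u) (c := -c) hAB hA0
    (fun u hu => (h u hu).neg)
    (fun u hu => by
      have := hb u hu
      have h2 : (-c) / u = -(c/u) := by ring
      rw [h2]; linarith)
  try simp only at this
  linarith

/-! ### Quantitative field bounds -/

set_option maxHeartbeats 1000000 in
lemma field_push {p h q t Cb ε : ℝ} (ht1 : 1 ≤ t) (hCb : 1 ≤ Cb) (hε : 0 < ε) (hε1 : ε ≤ 1)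
    (htC : 4 * Cb / ε ≤ t) (hp : |p| ≤ Cb / t ^ 2) (hq : |q| ≤ Cb / t ^ 3)
    (hh : |h - 2 / t| ≤ Cb / t ^ 2) :
    (∀ x, x ∈ Icc ε 1 → -p * x ^ 2 - h * x + q ≤ -(ε / t)) ∧
    (∀ x, x ∈ Icc (-1) (-ε) → ε / t ≤ -p * x ^ 2 - h * x + q) := by
  have ht0 : (0:ℝ) < t := lt_of_lt_of_le one_pos ht1
  have hCb0 : (0:ℝ) < Cb := lt_of_lt_of_le one_pos hCb
  have hCbt : Cb ≤ ε * t / 4 := by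
    rw [div_le_iff₀ hε] at htC
    linarith [htC]
  -- |p t| ≤ ε/4
  have hpt : |p * t| ≤ ε / 4 := by
    rw [abs_mul, abs_of_pos ht0]
    calc |p| * t ≤ (Cb / t ^ 2) * t := by
          exact mul_le_mul_of_nonneg_right hp ht0.le
      _ = Cb / t := by field_simp
      _ ≤ (ε * t / 4) / t := by apply div_le_div_of_nonneg_right hCbt ht0.le |>.trans_eq rfl
      _ = ε / 4 := by field_simp
  have hqt : |q * t| ≤ ε / 4 := by
    rw [abs_mul, abs_of_pos ht0]
    calc |q| * t ≤ (Cb / t ^ 3) * t := mul_le_mul_of_nonneg_right hq ht0.le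
      _ = Cb / t ^ 2 := by field_simp
      _ ≤ Cb / t := by
          apply div_le_div_of_nonneg_left hCb0.le ht0
          nlinarith
      _ ≤ (ε * t / 4) / t := div_le_div_of_nonneg_right hCbt ht0.le |>.trans_eq rfl
      _ = ε / 4 := by field_simp
  have hht : |h * t - 2| ≤ ε / 4 := by
    have heq : h * t - 2 = (h - 2 / t) * t := by field_simp
    rw [heq, abs_mul, abs_of_pos ht0]
    calc |h - 2/t| * t ≤ (Cb / t ^ 2) * t := mul_le_mul_of_nonneg_right hh ht0.le
      _ = Cb / t := by field_simp
      _ ≤ (ε * t / 4) / t := div_le_div_of_nonneg_right hCbt ht0.le |>.trans_eq rfl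
      _ = ε / 4 := by field_simp
  obtain ⟨hpt1, hpt2⟩ := abs_le.mp hpt
  obtain ⟨hqt1, hqt2⟩ := abs_le.mp hqt
  obtain ⟨hht1, hht2⟩ := abs_le.mp hht
  have hht' : 2 - ε / 4 ≤ h * t := by linarith
  have hhtpos : 0 ≤ h * t := by linarith
  constructor
  · intro x hx
    rw [← neg_div, le_div_iff₀ ht0]
    have hx1 : ε ≤ x := hx.1
    have hx2 : x ≤ 1 := hx.2
    have hxsq : x ^ 2 ≤ 1 := by nlinarith
    have key : (-p * x ^ 2 - h * x + q) * t = -((p * t) * x ^ 2) - (h * t) * x + q * t := by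
      ring
    rw [key]
    have e1 : -((p * t) * x ^ 2) ≤ ε / 4 := by
      have h1 := mul_le_mul_of_nonneg_right (show -(p * t) ≤ ε / 4 by linarith) (sq_nonneg x)
      have h2 : (ε / 4) * x ^ 2 ≤ (ε / 4) * 1 :=
        mul_le_mul_of_nonneg_left hxsq (by linarith)
      linarith
    have e2 : (2 - ε / 4) * ε ≤ (h * t) * x :=
      mul_le_mul hht' hx1 hε.le hhtpos
    have eps2 : ε * ε ≤ 1 * ε := mul_le_mul_of_nonneg_right hε1 hε.le
    nlinarith [e1, e2, hqt2, eps2, hε.le]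
  · intro x hx
    rw [div_le_iff₀ ht0]
    have hx1 : (-1:ℝ) ≤ x := hx.1
    have hx2 : x ≤ -ε := hx.2
    have hxsq : x ^ 2 ≤ 1 := by nlinarith
    have key : (-p * x ^ 2 - h * x + q) * t = -((p * t) * x ^ 2) - (h * t) * x + q * t := by
      ring
    rw [key]
    have e1 : -(ε / 4) ≤ -((p * t) * x ^ 2) := by
      have h1 := mul_le_mul_of_nonneg_right (show p * t ≤ ε / 4 by linarith) (sq_nonneg x)
      have h2 : (ε / 4) * x ^ 2 ≤ (ε / 4) * 1 :=
        mul_le_mul_of_nonneg_left hxsq (by linarith)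
      linarith
    have e2 : (2 - ε / 4) * ε ≤ (h * t) * (-x) :=
      mul_le_mul hht' (by linarith) hε.le hhtpos
    have eps2 : ε * ε ≤ 1 * ε := mul_le_mul_of_nonneg_right hε1 hε.le
    nlinarith [e1, e2, hqt1, eps2, hε.le]

set_option maxHeartbeats 4000000 in
theorem blowup_exists_outermost_mots (ℓ₀ : ℝ) (R Kl KR : ℝ → ℝ)
    (hR : ContDiff ℝ (⊤ : ℕ∞) R)
    (hKl : ContDiff ℝ (⊤ : ℕ∞) Kl)
    (hKR : ContDiff ℝ (⊤ : ℕ∞) KR)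
    (hRpos : ∀ ℓ ∈ Set.Ici ℓ₀, 0 < R ℓ)
    (hdecay : JangDecay R Kl KR)
    (hsign : (∀ ℓ ∈ Set.Ici ℓ₀, thetaMinus R KR ℓ < 0) ∨
             (∀ ℓ ∈ Set.Ici ℓ₀, trKf Kl KR ℓ < 0))
    (ℓs : ℝ) (hℓs : ℓ₀ ≤ ℓs)
    (hmots : thetaPlus R KR ℓs = 0)
    (houtermost : ∀ ℓ, ℓs < ℓ → 0 < thetaPlus R KR ℓ)
    (hstable : ∃ m, 1 ≤ m ∧ 0 < iteratedDeriv m (thetaPlus R KR) ℓs) :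
    ∃ k : ℝ → ℝ, IsBlowupSolution R Kl KR ℓs k ∧ deriv k ℓs = 0 := by
  clear hstable
  -- ### Step 0 : setup
  have hRs : 0 < R ℓs := hRpos ℓs hℓs
  have hUopen : IsOpen (R ⁻¹' (Ioi 0)) := isOpen_Ioi.preimage hR.continuous
  obtain ⟨δ, hδpos, hδ⟩ := Metric.isOpen_iff.mp hUopen ℓs hRs
  set a₀ : ℝ := ℓs - δ / 2 with ha₀def
  have ha₀ : a₀ < ℓs := by simp [ha₀def]; linarith
  have hRpos' : ∀ x ∈ Ici a₀, 0 < R x := by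
    intro x hx
    rcases le_or_gt ℓ₀ x with h | h
    · exact hRpos x h
    · have hxs : x < ℓs := lt_of_lt_of_le h hℓs
      have : dist x ℓs < δ := by
        rw [Real.dist_eq, abs_of_nonpos (by linarith)]
        simp only [ha₀def, mem_Ici] at hx
        linarith
      exact hδ this
  have hRne : ∀ x ∈ Ici a₀, R x ≠ 0 := fun x hx => (hRpos' x hx).ne'
  -- smoothness / continuity of coefficients
  have hKlc : Continuous Kl := hKl.continuous
  have hKRc : Continuous KR := hKR.continuous
  have htrKc : Continuous (trKf Kl KR) := by
    unfold trKf; fun_prop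
  have hRd : ContDiff ℝ (⊤ : ℕ∞) (deriv R) := (contDiff_infty_iff_deriv.mp hR).2
  have hHsm : ContDiffOn ℝ (⊤ : ℕ∞) (Hf R) {x | R x ≠ 0} := by
    unfold Hf
    exact ContDiffOn.div ((contDiff_const.mul hRd).contDiffOn) hR.contDiffOn fun x hx => hx
  have hIci_sub : Ici a₀ ⊆ {x | R x ≠ 0} := fun x hx => hRne x hx
  have hHc : ContinuousOn (Hf R) (Ici a₀) := (hHsm.continuousOn).mono hIci_sub
  -- ### Step 1 : Lipschitz constants and Picard-Lindelöf existence on compacts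
  have hlip : ∀ T : ℝ, ∃ K : NNReal, ∀ t ∈ Icc a₀ T, LipschitzWith K (Fcf R Kl KR t) := by
    intro T
    obtain ⟨B1, hB1⟩ := isCompact_Icc.exists_bound_of_continuousOn
      (hKlc.continuousOn : ContinuousOn Kl (Icc a₀ T))
    obtain ⟨B2, hB2⟩ := isCompact_Icc.exists_bound_of_continuousOn
      (hHc.mono (Icc_subset_Ici_self))
    refine ⟨Real.toNNReal (2 * B1 + B2), fun t ht => ?_⟩
    have hb1 := hB1 t ht
    have hb2 := hB2 t ht
    rw [Real.norm_eq_abs] at hb1 hb2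
    have habs : ∀ x y : ℝ, |Fcf R Kl KR t x - Fcf R Kl KR t y| ≤ (2 * B1 + B2) * |x - y| := by
      intro x y
      have hcx := clampJ_mem x
      have hcy := clampJ_mem y
      have hkey : Fcf R Kl KR t x - Fcf R Kl KR t y
          = (clampJ x - clampJ y) * (-(Kl t) * (clampJ x + clampJ y) - Hf R t) := by
        simp only [Fcf, Ff]; ring
      rw [hkey, abs_mul]
      have h1 : |(-(Kl t) * (clampJ x + clampJ y) - Hf R t)| ≤ 2 * B1 + B2 := by
        have : |clampJ x + clampJ y| ≤ 2 := by
          rw [abs_le]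
          constructor <;> [nlinarith [hcx.1, hcy.1]; nlinarith [hcx.2, hcy.2]]
        calc |(-(Kl t) * (clampJ x + clampJ y) - Hf R t)|
            ≤ |(-(Kl t)) * (clampJ x + clampJ y)| + |Hf R t| := abs_sub _ _
          _ ≤ |Kl t| * 2 + B2 := by
              rw [abs_mul, abs_neg]
              exact add_le_add (mul_le_mul_of_nonneg_left this (abs_nonneg _)) hb2
          _ ≤ 2 * B1 + B2 := by nlinarith [abs_nonneg (Kl t)]
      have h2 : |clampJ x - clampJ y| ≤ |x - y| := by
        have := clampJ_lipschitz.dist_le_mul x y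
        simpa [Real.dist_eq] using this
      calc |clampJ x - clampJ y| * |(-(Kl t) * (clampJ x + clampJ y) - Hf R t)|
          ≤ |x - y| * (2 * B1 + B2) :=
            mul_le_mul h2 h1 (abs_nonneg _) (abs_nonneg _)
        _ = (2 * B1 + B2) * |x - y| := by ring
    rw [lipschitzWith_iff_dist_le_mul]
    intro x y
    rw [Real.dist_eq, Real.dist_eq]
    calc |Fcf R Kl KR t x - Fcf R Kl KR t y| ≤ (2 * B1 + B2) * |x - y| := habs x y
      _ ≤ Real.toNNReal (2 * B1 + B2) * |x - y| :=
          mul_le_mul_of_nonneg_right (Real.le_coe_toNNReal _) (abs_nonneg _)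
  have hFccont : ∀ x : ℝ, ContinuousOn (fun t => Fcf R Kl KR t x) (Ici a₀) := by
    intro x
    simp only [Fcf, Ff]
    exact ((hKlc.continuousOn.neg.mul continuousOn_const).sub
      (hHc.mul continuousOn_const)).add htrKc.continuousOn
  have exist : ∀ T : ℝ, ℓs + 1 ≤ T → ∃ f : ℝ → ℝ, f ℓs = -1 ∧
      ∀ t ∈ Icc a₀ T, HasDerivWithinAt f (Fcf R Kl KR t (f t)) (Icc a₀ T) t := by
    intro T hT
    have haT : a₀ ≤ T := by linarith
    obtain ⟨L, hL⟩ := hlip T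
    obtain ⟨B1, hB1⟩ := isCompact_Icc.exists_bound_of_continuousOn
      (hKlc.continuousOn : ContinuousOn Kl (Icc a₀ T))
    obtain ⟨B2, hB2⟩ := isCompact_Icc.exists_bound_of_continuousOn
      (hHc.mono (Icc_subset_Ici_self))
    obtain ⟨B3, hB3⟩ := isCompact_Icc.exists_bound_of_continuousOn
      (htrKc.continuousOn : ContinuousOn (trKf Kl KR) (Icc a₀ T))
    have hmem : ℓs ∈ Icc a₀ T := ⟨ha₀.le, by linarith⟩
    have hB1n : 0 ≤ B1 := le_trans (norm_nonneg _) (hB1 ℓs hmem)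
    have hB2n : 0 ≤ B2 := le_trans (norm_nonneg _) (hB2 ℓs hmem)
    have hB3n : 0 ≤ B3 := le_trans (norm_nonneg _) (hB3 ℓs hmem)
    set C : ℝ := B1 + B2 + B3 with hCdef
    set Rad : ℝ := (C + 1) * ((T - a₀) + 1) with hRaddef
    have hCn : 0 ≤ C := by rw [hCdef]; linarith
    have hRadn : 0 ≤ Rad := by rw [hRaddef]; nlinarith
    have hPL : IsPicardLindelof (Fcf R Kl KR) (⟨ℓs, hmem⟩ : Icc a₀ T) (-1)
        (Real.toNNReal Rad) 0 (Real.toNNReal C) L := by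
      refine ⟨?_, ?_, ?_, ?_⟩
      · exact fun t ht => (hL t ht).lipschitzOnWith
      · exact fun x _ => (hFccont x).mono Icc_subset_Ici_self
      · intro t ht x _
        rw [Real.coe_toNNReal _ hCn]
        have hc := clampJ_mem x
        have h1 := hB1 t ht; have h2 := hB2 t ht; have h3 := hB3 t ht
        rw [Real.norm_eq_abs] at h1 h2 h3 ⊢
        have hcabs : |clampJ x| ≤ 1 := abs_le.mpr ⟨hc.1, hc.2⟩
        calc |Fcf R Kl KR t x| ≤ |(-(Kl t)) * clampJ x ^ 2| + |Hf R t * clampJ x|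
              + |trKf Kl KR t| := by
              simp only [Fcf, Ff]
              calc |(-(Kl t)) * clampJ x ^ 2 - Hf R t * clampJ x + trKf Kl KR t|
                  ≤ |(-(Kl t)) * clampJ x ^ 2 - Hf R t * clampJ x| + |trKf Kl KR t| :=
                    abs_add_le _ _
                _ ≤ |(-(Kl t)) * clampJ x ^ 2| + |Hf R t * clampJ x| + |trKf Kl KR t| :=
                    add_le_add_left (abs_sub _ _) _
          _ ≤ B1 + B2 + B3 := by
              rw [abs_mul, abs_mul, abs_neg, abs_pow]
              have e1 : |Kl t| * |clampJ x| ^ 2 ≤ B1 * 1 := by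
                apply mul_le_mul h1 (by nlinarith [abs_nonneg (clampJ x)])
                  (by positivity) hB1n
              have e2 : |Hf R t| * |clampJ x| ≤ B2 * 1 :=
                mul_le_mul h2 hcabs (abs_nonneg _) hB2n
              linarith
      · simp only [Real.coe_toNNReal _ hCn, Real.coe_toNNReal _ hRadn, NNReal.coe_zero, sub_zero]
        have hmax : max (T - ℓs) (ℓs - a₀) ≤ (T - a₀) := by
          apply max_le <;> [linarith [hmem.1]; linarith [hmem.2]]
        calc C * max (T - ℓs) (ℓs - a₀) ≤ C * (T - a₀) := by
              apply mul_le_mul_of_nonneg_left hmax (by positivity)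
          _ ≤ Rad := by rw [hRaddef]; nlinarith [show (0:ℝ) ≤ T - a₀ by linarith]
    exact hPL.exists_eq_forall_mem_Icc_hasDerivWithinAt (Metric.mem_closedBall_self le_rfl)
  -- ### Step 2 : glue solutions into a global one
  have hTn : ∀ n : ℕ, ℓs + 1 ≤ ℓs + n + 1 := by
    intro n
    have : (0:ℝ) ≤ n := Nat.cast_nonneg n
    linarith
  choose sol hsol0 hsol' using fun n : ℕ => exist (ℓs + n + 1) (hTn n)
  have hmemd : ∀ (n : ℕ) (ℓ : ℝ), a₀ < ℓ → ℓ < ℓs + n + 1 →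
      HasDerivAt (sol n) (Fcf R Kl KR ℓ (sol n ℓ)) ℓ := by
    intro n ℓ h1 h2
    exact (hsol' n ℓ ⟨h1.le, h2.le⟩).hasDerivAt (Icc_mem_nhds h1 h2)
  have uniq : ∀ n m : ℕ, n ≤ m → EqOn (sol n) (sol m) (Icc a₀ (ℓs + n + 1)) := by
    intro n m hnm
    obtain ⟨K, hK⟩ := hlip (ℓs + m + 1)
    have hnm' : ℓs + n + 1 ≤ ℓs + m + 1 := by
      have : (n:ℝ) ≤ m := Nat.cast_le.mpr hnm
      linarith
    set s : ℝ → Set ℝ := fun t => if t ∈ Icc a₀ (ℓs + m + 1) then univ else ∅ with hsdef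
    have hv : ∀ t, LipschitzOnWith K (Fcf R Kl KR t) (s t) := by
      intro t
      by_cases h : t ∈ Icc a₀ (ℓs + m + 1)
      · rw [hsdef]; simp only [if_pos h]
        exact (hK t h).lipschitzOnWith
      · rw [hsdef]; simp only [if_neg h]
        exact lipschitzOnWith_empty _ _
    have hℓsm : ℓs ∈ Ioo a₀ (ℓs + n + 1) := ⟨ha₀, by
      have : (0:ℝ) ≤ n := Nat.cast_nonneg n
      linarith⟩
    have hmemset : ∀ t ∈ Ioo a₀ (ℓs + n + 1), ∀ f : ℝ → ℝ, f t ∈ s t := by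
      intro t ht f
      have : t ∈ Icc a₀ (ℓs + m + 1) := ⟨ht.1.le, ht.2.le.trans hnm'⟩
      rw [hsdef]; simp only [if_pos this]; trivial
    refine ODE_solution_unique_of_mem_Icc (fun t _ => hv t) hℓsm ?_ ?_ ?_ ?_ ?_ ?_ ?_
    · exact fun u hu => (hsol' n u hu).continuousWithinAt
    · exact fun t ht => hmemd n t ht.1 ht.2
    · exact fun t ht => hmemset t ht (sol n)
    · have : ContinuousOn (sol m) (Icc a₀ (ℓs + m + 1)) :=
        fun u hu => (hsol' m u hu).continuousWithinAt
      exact this.mono (Icc_subset_Icc_right hnm')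
    · exact fun t ht => hmemd m t ht.1 (lt_of_lt_of_le ht.2 hnm')
    · exact fun t ht => hmemset t ht (sol m)
    · rw [hsol0 n, hsol0 m]
  set k : ℝ → ℝ := fun ℓ => sol ⌊ℓ - ℓs⌋₊ ℓ with hkdef
  have hfloor : ∀ ℓ : ℝ, ℓ < ℓs + ⌊ℓ - ℓs⌋₊ + 1 := by
    intro ℓ
    rcases le_or_gt ℓs ℓ with h | h
    · have := Nat.lt_floor_add_one (ℓ - ℓs)
      linarith
    · have : ⌊ℓ - ℓs⌋₊ = 0 := Nat.floor_of_nonpos (by linarith)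
      rw [this]
      push_cast
      linarith
  have keq : ∀ (n : ℕ) (ℓ : ℝ), a₀ < ℓ → ℓ < ℓs + n + 1 → k ℓ = sol n ℓ := by
    intro n ℓ h1 h2
    set p := ⌊ℓ - ℓs⌋₊ with hpdef
    have hp : ℓ < ℓs + p + 1 := hfloor ℓ
    rw [hkdef]
    simp only
    rcases le_total p n with h | h
    · exact uniq p n h ⟨h1.le, hp.le⟩
    · exact (uniq n p h ⟨h1.le, h2.le⟩).symm
  have hk0 : k ℓs = -1 := by
    rw [keq 0 ℓs ha₀ (by push_cast; linarith), hsol0 0]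
  have hk' : ∀ ℓ, a₀ < ℓ → HasDerivAt k (Fcf R Kl KR ℓ (k ℓ)) ℓ := by
    intro ℓ h1
    set n := ⌊ℓ - ℓs⌋₊ with hndef
    have h2 : ℓ < ℓs + n + 1 := hfloor ℓ
    have hev : k =ᶠ[𝓝 ℓ] sol n := by
      filter_upwards [Ioo_mem_nhds h1 h2] with x hx
      exact keq n x hx.1 hx.2
    have hkℓ : k ℓ = sol n ℓ := keq n ℓ h1 h2
    have := hmemd n ℓ h1 h2
    rw [← hkℓ] at this
    exact this.congr_of_eventuallyEq hev
  -- ### Step 3 : barriers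
  have hkfam : ∀ t, ℓs ≤ t → HasDerivAt k (Fcf R Kl KR t (k t)) t :=
    fun t ht => hk' t (lt_of_lt_of_le ha₀ ht)
  have hub : ∀ t, ℓs ≤ t → k t < 1 := by
    rcases hsign with hθm | htr
    · refine no_cross_up (c := 1) hkfam ?_ (by rw [hk0]; norm_num)
      intro t ht h1
      rw [h1]
      have hc : clampJ (1:ℝ) = 1 := clampJ_eq (by norm_num) le_rfl
      have hθ := hθm t (le_trans hℓs ht.le)
      simp only [thetaMinus] at hθ
      simp only [Fcf, Ff, hc, trKf]
      nlinarith
    · have h0 : ∀ t, ℓs ≤ t → k t < 0 := by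
        refine no_cross_up (c := 0) hkfam ?_ (by rw [hk0]; norm_num)
        intro t ht h1
        rw [h1]
        have hc : clampJ (0:ℝ) = 0 := clampJ_eq (by norm_num) (by norm_num)
        have hθ := htr t (le_trans hℓs ht.le)
        simp only [Fcf, Ff, hc]
        nlinarith
      exact fun t ht => (h0 t ht).trans one_pos
  have hlb : ∀ t, ℓs ≤ t → -1 ≤ k t := by
    intro t ht
    by_contra hcon
    push_neg at hcon
    set c : ℝ := (k t + (-1)) / 2 with hcdef
    have hc1 : k t < c := by rw [hcdef]; linarith
    have hc2 : c < -1 := by rw [hcdef]; linarith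
    have := no_cross_down (c := c) hkfam (fun u hu hku => by
      rw [hku]
      have hcc : clampJ c = -1 := clampJ_of_le hc2.le
      have hθ := houtermost u hu
      simp only [thetaPlus] at hθ
      simp only [Fcf, Ff, hcc, trKf]
      nlinarith) (by rw [hk0]; exact hc2) t ht
    linarith
  have hclamp : ∀ t, ℓs ≤ t → clampJ (k t) = k t :=
    fun t ht => clampJ_eq (hlb t ht) (hub t ht).le
  have hk2 : ∀ t, ℓs ≤ t → HasDerivAt k (Ff R Kl KR t (k t)) t := by
    intro t ht
    have := hkfam t ht
    simpa only [Fcf, hclamp t ht] using this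
  -- ### Step 4 : strict lower bound via integrating factor
  have hstrict : ∀ t, ℓs < t → -1 < k t := by
    intro t htt
    set aa : ℝ → ℝ := fun u => -(Kl u) * (k u - 1) - Hf R u with haadef
    have haacont : ContinuousOn aa (Ioi a₀) := by
      have hkcont : ContinuousOn k (Ioi a₀) :=
        fun u hu => (hk' u hu).continuousAt.continuousWithinAt
      exact ((hKlc.continuousOn.neg.mul (hkcont.sub continuousOn_const)).sub
        (hHc.mono Ioi_subset_Ici_self))
    set A : ℝ → ℝ := fun ℓ => ∫ u in ℓs..ℓ, aa u with hAdef
    have hsub : ∀ ℓ ∈ Icc ℓs t, Icc ℓs ℓ ⊆ Ioi a₀ := by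
      intro ℓ _ x hx
      exact lt_of_lt_of_le ha₀ hx.1
    have hAint : ∀ ℓ ∈ Icc ℓs t, IntervalIntegrable aa MeasureTheory.volume ℓs ℓ := by
      intro ℓ hℓ
      apply ContinuousOn.intervalIntegrable
      rw [uIcc_of_le hℓ.1]
      exact haacont.mono (hsub ℓ hℓ)
    have hA : ∀ ℓ ∈ Icc ℓs t, HasDerivAt A (aa ℓ) ℓ := by
      intro ℓ hℓ
      have hℓa : ℓ ∈ Ioi a₀ := lt_of_lt_of_le ha₀ hℓ.1
      exact intervalIntegral.integral_hasDerivAt_right (hAint ℓ hℓ)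
        (haacont.stronglyMeasurableAtFilter isOpen_Ioi ℓ hℓa)
        (haacont.continuousAt (isOpen_Ioi.mem_nhds hℓa))
    set w : ℝ → ℝ := fun ℓ => (k ℓ + 1) * Real.exp (-A ℓ) with hwdef
    have hw : ∀ ℓ ∈ Icc ℓs t, HasDerivAt w (thetaPlus R KR ℓ * Real.exp (-A ℓ)) ℓ := by
      intro ℓ hℓ
      have h1 := ((hk2 ℓ hℓ.1).add_const 1).mul (((hA ℓ hℓ).neg).exp)
      have heq : Ff R Kl KR ℓ (k ℓ) * Real.exp (-A ℓ)
          + (k ℓ + 1) * (Real.exp (-A ℓ) * -aa ℓ)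
          = thetaPlus R KR ℓ * Real.exp (-A ℓ) := by
        simp only [Ff, trKf, thetaPlus, haadef]
        ring
      rw [← heq]
      exact h1
    have hwint : IntervalIntegrable (fun ℓ => thetaPlus R KR ℓ * Real.exp (-A ℓ))
        MeasureTheory.volume ℓs t := by
      apply ContinuousOn.intervalIntegrable
      rw [uIcc_of_le htt.le]
      have hAcont : ContinuousOn A (Icc ℓs t) :=
        fun u hu => (hA u hu).continuousAt.continuousWithinAt
      have hθcont : ContinuousOn (thetaPlus R KR) (Icc ℓs t) := by
        have h1 : ContinuousOn (thetaPlus R KR) (Ici a₀) :=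
          (continuousOn_const.mul hKRc.continuousOn).add hHc
        exact h1.mono fun x hx => le_trans ha₀.le hx.1
      exact hθcont.mul (ContinuousOn.rexp hAcont.neg)
    have hftc : ∫ u in ℓs..t, thetaPlus R KR u * Real.exp (-A u) = w t - w ℓs := by
      apply intervalIntegral.integral_eq_sub_of_hasDerivAt
      · intro x hx
        rw [uIcc_of_le htt.le] at hx
        exact hw x hx
      · exact hwint
    have hpos : 0 < ∫ u in ℓs..t, thetaPlus R KR u * Real.exp (-A u) := by
      apply intervalIntegral.intervalIntegral_pos_of_pos_on hwint ?_ htt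
      intro x hx
      exact mul_pos (houtermost x hx.1) (Real.exp_pos _)
    have hw0 : w ℓs = 0 := by
      rw [hwdef]; simp [hk0]
    rw [hftc, hw0, sub_zero, hwdef] at hpos
    simp only at hpos
    nlinarith [Real.exp_pos (-A t)]
  -- ### Step 5 : decay at infinity
  obtain ⟨-, hHO, -, hKlO, -, -, -, htrO⟩ := hdecay
  rw [isBigO_iff] at hHO hKlO htrO
  obtain ⟨c1, hc1⟩ := hHO
  obtain ⟨c2, hc2⟩ := hKlO
  obtain ⟨c3, hc3⟩ := htrO
  have hev := (hc1.and (hc2.and hc3)).and (eventually_ge_atTop (max ℓs 1))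
  rw [eventually_atTop] at hev
  obtain ⟨M₀, hM₀⟩ := hev
  set Cb : ℝ := max (max c1 (max c2 c3)) 1 with hCbdef
  have hCb1 : 1 ≤ Cb := le_max_right _ _
  set M : ℝ := max M₀ (max ℓs 1) with hMdef
  have hMℓs : ℓs ≤ M := le_trans (le_max_left _ _) (le_max_right _ _)
  have hM1 : (1:ℝ) ≤ M := le_trans (le_max_right _ _) (le_max_right _ _)
  have hbounds : ∀ t, M ≤ t → |Kl t| ≤ Cb / t ^ 2 ∧ |trKf Kl KR t| ≤ Cb / t ^ 3 ∧
      |Hf R t - 2 / t| ≤ Cb / t ^ 2 := by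
    intro t ht
    have ht1 : (1:ℝ) ≤ t := le_trans hM1 ht
    have ht0 : (0:ℝ) < t := lt_of_lt_of_le one_pos ht1
    obtain ⟨⟨hH1, hK1, hT1⟩, -⟩ := hM₀ t (le_trans (le_max_left _ _) ht)
    rw [Real.norm_eq_abs, Real.norm_eq_abs] at hH1 hK1 hT1
    have habs2 : |(t ^ 2)⁻¹| = 1 / t ^ 2 := by
      rw [abs_inv, abs_of_pos (by positivity)]; ring
    have habs3 : |(t ^ 3)⁻¹| = 1 / t ^ 3 := by
      rw [abs_inv, abs_of_pos (by positivity)]; ring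
    rw [habs2] at hH1 hK1
    rw [habs3] at hT1
    have hc1Cb : c1 ≤ Cb := le_trans (le_max_left _ _) (le_max_left _ _)
    have hc2Cb : c2 ≤ Cb := le_trans (le_trans (le_max_left _ _) (le_max_right _ _))
      (le_max_left _ _)
    have hc3Cb : c3 ≤ Cb := le_trans (le_trans (le_max_right _ _) (le_max_right _ _))
      (le_max_left _ _)
    have h2pos : (0:ℝ) < 1 / t ^ 2 := by positivity
    have h3pos : (0:ℝ) < 1 / t ^ 3 := by positivity
    refine ⟨?_, ?_, ?_⟩
    · calc |Kl t| ≤ c2 * (1 / t ^ 2) := hK1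
        _ ≤ Cb * (1 / t ^ 2) := mul_le_mul_of_nonneg_right hc2Cb h2pos.le
        _ = Cb / t ^ 2 := by ring
    · calc |trKf Kl KR t| ≤ c3 * (1 / t ^ 3) := hT1
        _ ≤ Cb * (1 / t ^ 3) := mul_le_mul_of_nonneg_right hc3Cb h3pos.le
        _ = Cb / t ^ 3 := by ring
    · calc |Hf R t - 2 / t| ≤ c1 * (1 / t ^ 2) := hH1
        _ ≤ Cb * (1 / t ^ 2) := mul_le_mul_of_nonneg_right hc1Cb h2pos.le
        _ = Cb / t ^ 2 := by ring
  have key : ∀ ε : ℝ, 0 < ε → ε ≤ 1 → ∃ N, ∀ t, N ≤ t → |k t| < ε := by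
    intro ε hε hε1
    set A : ℝ := max M (4 * Cb / ε) with hAdef2
    have hMA : M ≤ A := le_max_left _ _
    have hA1 : (1:ℝ) ≤ A := le_trans hM1 hMA
    have hAℓs : ℓs ≤ A := le_trans hMℓs hMA
    have hA0 : (0:ℝ) < A := lt_of_lt_of_le one_pos hA1
    have hbnds : ∀ t, A ≤ t →
        (∀ x, x ∈ Icc ε 1 → Ff R Kl KR t x ≤ -(ε / t)) ∧
        (∀ x, x ∈ Icc (-1) (-ε) → ε / t ≤ Ff R Kl KR t x) := by
      intro t ht
      have ht1 : (1:ℝ) ≤ t := le_trans hA1 ht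
      have h4 : 4 * Cb / ε ≤ t := le_trans (le_max_right _ _) ht
      obtain ⟨hp, hq, hh⟩ := hbounds t (le_trans hMA ht)
      exact field_push ht1 hCb1 hε hε1 h4 hp hq hh
    have hkcontA : ContinuousOn k (Ici A) := fun u hu =>
      (hkfam u (le_trans hAℓs hu)).continuousAt.continuousWithinAt
    have henter : ∃ t₁, A ≤ t₁ ∧ |k t₁| < ε := by
      by_contra hno
      push_neg at hno
      set B : ℝ := A * Real.exp (3 / ε) with hBdef
      have hexp1 : (1:ℝ) ≤ Real.exp (3 / ε) := Real.one_le_exp (by positivity)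
      have hAB : A ≤ B := by
        calc A = A * 1 := (mul_one A).symm
          _ ≤ A * Real.exp (3 / ε) := mul_le_mul_of_nonneg_left hexp1 hA0.le
      have hlog : Real.log B - Real.log A = 3 / ε := by
        rw [hBdef, Real.log_mul hA0.ne' (Real.exp_ne_zero _), Real.log_exp]
        ring
      have hsame : (∀ u ∈ Icc A B, ε ≤ k u) ∨ (∀ u ∈ Icc A B, k u ≤ -ε) := by
        have hkA := hno A le_rfl
        rcases le_or_gt ε (k A) with hA' | hA'
        · left
          intro u hu
          by_contra hlt
          push_neg at hlt
          have hu' : k u ≤ -ε := by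
            have := hno u hu.1
            rcases abs_cases (k u) with ⟨h, -⟩ | ⟨h, -⟩ <;> [linarith; linarith]
          obtain ⟨v, hvmem, hkv⟩ := intermediate_value_Icc' hu.1
            (hkcontA.mono (Icc_subset_Ici_self))
            (show (0:ℝ) ∈ Icc (k u) (k A) from ⟨by linarith, by linarith⟩)
          have := hno v hvmem.1
          rw [hkv] at this
          simp at this
          linarith
        · right
          have hA'' : k A ≤ -ε := by
            rcases abs_cases (k A) with ⟨h, -⟩ | ⟨h, -⟩ <;> [linarith; linarith]
          intro u hu
          by_contra hlt
          push_neg at hlt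
          have hu' : ε ≤ k u := by
            have := hno u hu.1
            rcases abs_cases (k u) with ⟨h, -⟩ | ⟨h, -⟩ <;> [linarith; linarith]
          obtain ⟨v, hvmem, hkv⟩ := intermediate_value_Icc hu.1
            (hkcontA.mono (Icc_subset_Ici_self))
            (show (0:ℝ) ∈ Icc (k A) (k u) from ⟨by linarith, by linarith⟩)
          have := hno v hvmem.1
          rw [hkv] at this
          simp at this
          linarith
      have hder : ∀ u ∈ Icc A B, HasDerivAt k (Ff R Kl KR u (k u)) u :=
        fun u hu => hk2 u (le_trans hAℓs hu.1)
      rcases hsame with hpos' | hneg'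
      · have hb : ∀ u ∈ Icc A B, Ff R Kl KR u (k u) ≤ (-ε) / u := by
          intro u hu
          have h1 := (hbnds u hu.1).1 (k u) ⟨hpos' u hu, (hub u (le_trans hAℓs hu.1)).le⟩
          rw [neg_div]
          exact h1
        have := integrate_le_log hAB hA0 hder hb
        rw [hlog] at this
        have hBk : ε ≤ k B := hpos' B (right_mem_Icc.mpr hAB)
        have : k B ≤ k A + (-ε) * (3 / ε) := this
        rw [neg_mul] at this
        have hεe : ε * (3 / ε) = 3 := by field_simp
        have hkA1 : k A < 1 := hub A hAℓs
        nlinarith [hεe]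
      · have hb : ∀ u ∈ Icc A B, ε / u ≤ Ff R Kl KR u (k u) := by
          intro u hu
          exact (hbnds u hu.1).2 (k u) ⟨hlb u (le_trans hAℓs hu.1), hneg' u hu⟩
        have := integrate_ge_log hAB hA0 hder hb
        rw [hlog] at this
        have hBk : k B ≤ -ε := hneg' B (right_mem_Icc.mpr hAB)
        have hkB1 : k B < 1 := hub B (le_trans hAℓs hAB)
        have hkA1 : -1 ≤ k A := hlb A hAℓs
        have hεe : ε * (3 / ε) = 3 := by field_simp
        nlinarith [hεe]
    obtain ⟨t₁, ht₁A, ht₁⟩ := henter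
    have ht₁ℓs : ℓs ≤ t₁ := le_trans hAℓs ht₁A
    have hup : ∀ t, t₁ ≤ t → k t < ε := by
      refine no_cross_up (c := ε) (fun t ht => hk2 t (le_trans ht₁ℓs ht)) ?_ (abs_lt.mp ht₁).2
      intro t ht hke
      rw [hke]
      have h1 := (hbnds t (le_trans ht₁A ht.le)).1 ε ⟨le_rfl, hε1⟩
      have ht0 : (0:ℝ) < t := lt_of_lt_of_le hA0 (le_trans ht₁A ht.le)
      have : (0:ℝ) < ε / t := by positivity
      linarith
    have hdn : ∀ t, t₁ ≤ t → -ε < k t := by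
      refine no_cross_down (c := -ε) (fun t ht => hk2 t (le_trans ht₁ℓs ht)) ?_ (abs_lt.mp ht₁).1
      intro t ht hke
      rw [hke]
      have h1 := (hbnds t (le_trans ht₁A ht.le)).2 (-ε) ⟨by linarith, le_rfl⟩
      have ht0 : (0:ℝ) < t := lt_of_lt_of_le hA0 (le_trans ht₁A ht.le)
      have : (0:ℝ) < ε / t := by positivity
      linarith
    exact ⟨t₁, fun t ht => abs_lt.mpr ⟨hdn t ht, hup t ht⟩⟩
  have htend : Tendsto k atTop (nhds 0) := by
    rw [Metric.tendsto_atTop]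
    intro ε hε
    obtain ⟨N, hN⟩ := key (min ε 1) (lt_min hε one_pos) (min_le_right _ _)
    refine ⟨N, fun n hn => ?_⟩
    rw [Real.dist_eq, sub_zero]
    exact lt_of_lt_of_le (hN n hn) (min_le_left _ _)
  -- ### Step 6 : smoothness
  have hHsmIci : ContDiffOn ℝ (⊤:ℕ∞) (Hf R) (Ici ℓs) :=
    hHsm.mono (fun x hx => hIci_sub (le_trans ha₀.le hx))
  have hsmooth : ∀ n : ℕ, ContDiffOn ℝ n k (Ici ℓs) := by
    intro n
    induction n with
    | zero =>
      rw [show ((0:ℕ) : WithTop ℕ∞) = 0 from rfl, contDiffOn_zero]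
      exact fun x hx => (hk2 x hx).continuousAt.continuousWithinAt
    | succ n ih =>
      have hcast : ((n + 1 : ℕ) : WithTop ℕ∞) = ((n : ℕ) : WithTop ℕ∞) + 1 := by
        norm_cast
      rw [hcast, contDiffOn_succ_iff_derivWithin (uniqueDiffOn_Ici ℓs)]
      refine ⟨fun x hx => (hk2 x hx).differentiableAt.differentiableWithinAt, ?_, ?_⟩
      · intro h
        simp at h
      · have hdw : ∀ x ∈ Ici ℓs, derivWithin k (Ici ℓs) x = Ff R Kl KR x (k x) := by
          intro x hx
          exact ((hk2 x hx).hasDerivWithinAt).derivWithin (uniqueDiffOn_Ici ℓs x hx)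
        have hn : ((n : ℕ) : WithTop ℕ∞) ≤ ((⊤:ℕ∞) : WithTop ℕ∞) := by
          exact_mod_cast le_top
        have hKln : ContDiffOn ℝ n Kl (Ici ℓs) := (hKl.contDiffOn).of_le hn
        have hKRn : ContDiffOn ℝ n KR (Ici ℓs) := (hKR.contDiffOn).of_le hn
        have hHn : ContDiffOn ℝ n (Hf R) (Ici ℓs) := hHsmIci.of_le hn
        have hF : ContDiffOn ℝ n
            (fun x => -(Kl x) * (k x * k x) - Hf R x * k x + (Kl x + 2 * KR x)) (Ici ℓs) :=
          ((hKln.neg.mul (ih.mul ih)).sub (hHn.mul ih)).add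
            (hKln.add (contDiffOn_const.mul hKRn))
        refine hF.congr ?_
        intro x hx
        rw [hdw x hx]
        simp only [Ff, trKf]
        ring
  have hsm : ContDiffOn ℝ (⊤:ℕ∞) k (Ici ℓs) := contDiffOn_infty.mpr hsmooth
  -- ### Final assembly
  have hode : ∀ ℓ ∈ Ici ℓs,
      HasDerivAt k (-(Kl ℓ) * k ℓ ^ 2 - Hf R ℓ * k ℓ + trKf Kl KR ℓ) ℓ :=
    fun ℓ hℓ => hk2 ℓ hℓ
  have habs : ∀ ℓ, ℓs < ℓ → |k ℓ| < 1 :=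
    fun ℓ h => abs_lt.mpr ⟨hstrict ℓ h, hub ℓ h.le⟩
  have hd0 : deriv k ℓs = 0 := by
    rw [(hk2 ℓs le_rfl).deriv]
    have hval : Ff R Kl KR ℓs (k ℓs) = thetaPlus R KR ℓs := by
      rw [hk0]
      simp only [Ff, trKf, thetaPlus]
      ring
    rw [hval, hmots]
  exact ⟨k, ⟨hsm, hode, hk0, habs, htend⟩, hd0⟩
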